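/- Let Λ be a measurable space, μ a probability measure on Λ, d a natural number, and for each i ∈ Fin d let 𝒩ᵢ be a set of probability measures on Λ and fᵢ : Λ → ℝ a measurable function with 0 ≤ fᵢ(λ) and Σ_{i} fᵢ(λ) = 1 for every λ ∈ Λ. Suppose ∫ fᵢ dν = 1 for every i ∈ Fin d and every ν ∈ 𝒩ᵢ. Then for every measurable Ω ⊆ Λ such that ν(Ω) = 1 for every ν ∈ ⋃_i 𝒩ᵢ, one has (μ Ω).toReal ≥ Σ_{i} ϖ(𝒩ᵢ | μ). -/

import Mathlib

open MeasureTheory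

/-- The asymmetric overlap `ϖ(𝒩|μ)`: the infimum of `μ Ω` over measurable sets `Ω`
that have full measure for every measure in `𝒩`. -/
noncomputable def asymmetricOverlap {Λ : Type*} [MeasurableSpace Λ]
    (N : Set (Measure Λ)) (μ : Measure Λ) : ℝ :=
  sInf { x : ℝ | ∃ Ω : Set Λ, MeasurableSet Ω ∧ (∀ ν ∈ N, ν Ω = 1) ∧ x = (μ Ω).toReal }

theorem basis_overlaps_add_up {Λ : Type*} [MeasurableSpace Λ]
    (μ : Measure Λ) [IsProbabilityMeasure μ]
    (d : ℕ) (N : Fin d → Set (Measure Λ))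
    (hN : ∀ i : Fin d, ∀ ν ∈ N i, IsProbabilityMeasure ν)
    (f : Fin d → Λ → ℝ) (hfm : ∀ i : Fin d, Measurable (f i))
    (hf0 : ∀ i : Fin d, ∀ x : Λ, 0 ≤ f i x)
    (hfsum : ∀ x : Λ, ∑ i : Fin d, f i x = 1)
    (hint : ∀ i : Fin d, ∀ ν ∈ N i, ∫ x, f i x ∂ν = 1) :
    ∀ Ω : Set Λ, MeasurableSet Ω → (∀ ν ∈ ⋃ i : Fin d, N i, ν Ω = 1) →
      (μ Ω).toReal ≥ ∑ i : Fin d, asymmetricOverlap (N i) μ := by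
  intro Ω hΩ hΩfull
  -- each f i is bounded by 1
  have hf1 : ∀ i : Fin d, ∀ x : Λ, f i x ≤ 1 := by
    intro i x
    have := hfsum x
    calc f i x ≤ ∑ j : Fin d, f j x :=
      Finset.single_le_sum (fun j _ => hf0 j x) (Finset.mem_univ i)
    _ = 1 := this
  set A : Fin d → Set Λ := fun i => {x | f i x = 1} with hA
  have hAm : ∀ i, MeasurableSet (A i) := fun i =>
    (hfm i) (measurableSet_singleton (1 : ℝ))
  -- full measure of A i under ν ∈ N i
  have hAfull : ∀ i : Fin d, ∀ ν ∈ N i, ν (A i) = 1 := by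
    intro i ν hν
    haveI := hN i ν hν
    have hgi : Integrable (f i) ν := by
      apply Integrable.mono' (integrable_const (1 : ℝ)) (hfm i).aestronglyMeasurable
      filter_upwards with x
      rw [Real.norm_eq_abs, abs_of_nonneg (hf0 i x)]
      exact hf1 i x
    have hzero : ∫ x, (1 - f i x) ∂ν = 0 := by
      rw [integral_sub (integrable_const 1) hgi, integral_const, hint i ν hν]
      simp
    have hae : (fun x => 1 - f i x) =ᵐ[ν] 0 :=
      (integral_eq_zero_iff_of_nonneg (f := fun x => 1 - f i x)
        (fun x => by simpa using hf1 i x)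
        (by exact (integrable_const (1:ℝ)).sub hgi)).mp hzero
    have hnull : ν (A i)ᶜ = 0 := by
      have : {x | ¬ (1 - f i x = 0)} ⊆ {x | (fun x => 1 - f i x) x ≠ (0 : Λ → ℝ) x} := by
        intro x hx; exact hx
      have h0 : ν {x | (1 - f i x) ≠ 0} = 0 := by
        have := hae
        rw [Filter.EventuallyEq, ae_iff] at this
        simpa using this
      apply measure_mono_null _ h0
      intro x hx
      simp only [Set.mem_compl_iff, Set.mem_setOf_eq, hA] at hx ⊢
      intro h; exact hx (by linarith)
    exact (prob_compl_eq_zero_iff (hAm i)).mp hnull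
  -- the A i are pairwise disjoint
  have hdisj : Pairwise (Function.onFun Disjoint fun i => Ω ∩ A i) := by
    intro i j hij
    rw [Function.onFun, Set.disjoint_left]
    rintro x ⟨-, hxi⟩ ⟨-, hxj⟩
    have h2 : (2 : ℝ) ≤ ∑ k : Fin d, f k x := by
      have : f i x + f j x ≤ ∑ k : Fin d, f k x := by
        have := Finset.sum_le_sum_of_subset_of_nonneg
          (Finset.subset_univ {i, j}) (fun k _ _ => hf0 k x)
        rwa [Finset.sum_pair hij] at this
      simp only [hA, Set.mem_setOf_eq] at hxi hxj
      linarith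
    rw [hfsum x] at h2; linarith
  -- each overlap is at most μ (Ω ∩ A i)
  have hle : ∀ i : Fin d, asymmetricOverlap (N i) μ ≤ (μ (Ω ∩ A i)).toReal := by
    intro i
    apply csInf_le
    · refine ⟨0, ?_⟩
      rintro x ⟨S, -, -, rfl⟩
      exact ENNReal.toReal_nonneg
    · refine ⟨Ω ∩ A i, hΩ.inter (hAm i), fun ν hν => ?_, rfl⟩
      haveI := hN i ν hν
      have h1 : ν Ω = 1 := hΩfull ν (Set.mem_iUnion.mpr ⟨i, hν⟩)
      have h2 : ν (A i)ᶜ = 0 := by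
        rw [prob_compl_eq_zero_iff (hAm i)]; exact hAfull i ν hν
      rw [measure_inter_conull h2]; exact h1
  calc ∑ i : Fin d, asymmetricOverlap (N i) μ
      ≤ ∑ i : Fin d, (μ (Ω ∩ A i)).toReal := Finset.sum_le_sum fun i _ => hle i
    _ = (∑ i : Fin d, μ (Ω ∩ A i)).toReal :=
        (ENNReal.toReal_sum (fun i _ => measure_ne_top μ _)).symm
    _ = (μ (⋃ i : Fin d, Ω ∩ A i)).toReal := by
        rw [measure_iUnion hdisj (fun i => hΩ.inter (hAm i)), tsum_fintype]
    _ ≤ (μ Ω).toReal := by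
        apply ENNReal.toReal_mono (measure_ne_top μ _)
        exact measure_mono (Set.iUnion_subset fun i => Set.inter_subset_left)
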